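/- The ring Z4[v]/(v^2 - 2) is a chain ring: its ideals form a chain R ⊇ (v) ⊇ (2) ⊇ (2v) ⊇ (0), and every ideal is one of these. -/

import Mathlib

open Polynomial

/-- The ring `Z₄[v]/(v² - 2)`. -/
abbrev R3 : Type := Polynomial (ZMod 4) ⧸ Ideal.span {(X : Polynomial (ZMod 4)) ^ 2 - 2}

/-- The image of `v` in `Z₄[v]/(v² - 2)`. -/
noncomputable def v3 : R3 := Ideal.Quotient.mk _ X

noncomputable def phi3 : ZMod 4 →+* R3 :=
  (Ideal.Quotient.mk _).comp (C : ZMod 4 →+* Polynomial (ZMod 4))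

lemma phi3_two : phi3 2 = (2 : R3) := by
  show (Ideal.Quotient.mk _) (C 2) = 2
  rw [map_ofNat, map_ofNat]

lemma v3_sq : v3 * v3 = phi3 2 := by
  rw [phi3_two]
  have h : (Ideal.Quotient.mk (Ideal.span {(X : Polynomial (ZMod 4)) ^ 2 - 2}))
      ((X : Polynomial (ZMod 4))^2 - 2) = 0 :=
    Ideal.Quotient.eq_zero_iff_mem.2 (Ideal.subset_span rfl)
  rw [map_sub, map_pow, sub_eq_zero] at h
  have : v3 ^ 2 = (2 : R3) := by rw [show v3 = Ideal.Quotient.mk _ X from rfl, h, map_ofNat]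
  rw [← this]; ring

lemma repr3 (x : R3) : ∃ a b : ZMod 4, x = phi3 a + phi3 b * v3 := by
  obtain ⟨p, rfl⟩ := Ideal.Quotient.mk_surjective x
  set m : Polynomial (ZMod 4) := X ^ 2 - 2 with hm
  have hm2 : m = X ^ 2 - C 2 := by rw [hm, map_ofNat]
  haveI : Fact (1 < 4) := ⟨by norm_num⟩
  have hmonic : m.Monic := by
    rw [hm2]; exact monic_X_pow_sub_C _ (by norm_num)
  have hdeg : (p %ₘ m).degree ≤ 1 := by
    have h1 := degree_modByMonic_lt p hmonic
    have h2 : m.degree = 2 := by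
      rw [hm2]; compute_degree!
    rw [h2] at h1
    exact Order.le_of_lt_succ h1
  have hr := eq_X_add_C_of_degree_le_one hdeg
  have hmk : Ideal.Quotient.mk (Ideal.span {m}) p = Ideal.Quotient.mk _ (p %ₘ m) := by
    conv_lhs => rw [← modByMonic_add_div p m]
    rw [map_add, map_mul]
    have : (Ideal.Quotient.mk (Ideal.span {m})) m = 0 :=
      Ideal.Quotient.eq_zero_iff_mem.2 (Ideal.subset_span rfl)
    rw [this, zero_mul, add_zero]
  refine ⟨(p %ₘ m).coeff 0, (p %ₘ m).coeff 1, ?_⟩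
  rw [hmk]
  conv_lhs => rw [hr]
  simp only [map_add, map_mul]
  show _ = (Ideal.Quotient.mk _) (C _) + (Ideal.Quotient.mk _) (C _) * (Ideal.Quotient.mk _ X)
  ring

lemma unit3 {a : ZMod 4} (b : ZMod 4) (ha : IsUnit a) : IsUnit (phi3 a + phi3 b * v3) := by
  have hu : IsUnit (a * a - 2 * b * b) := by revert ha; revert b; revert a; decide
  have key : (phi3 a + phi3 b * v3) * (phi3 a - phi3 b * v3) = phi3 (a * a - 2 * b * b) := by
    simp only [map_sub, map_mul]
    linear_combination (-(phi3 b * phi3 b)) * v3_sq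
  exact isUnit_of_mul_isUnit_left (key ▸ hu.map phi3)

lemma nonunit_eq {a : ZMod 4} (ha : ¬ IsUnit a) : ∃ c, a = 2 * c := by
  revert ha; revert a; decide

lemma nonunit_two_mul {a : ZMod 4} (ha : ¬ IsUnit a) : 2 * a = 0 := by
  revert ha; revert a; decide

lemma two_eq : (2 : R3) = phi3 2 := phi3_two.symm

theorem stmt3 :
    (⊥ : Ideal R3) ≤ Ideal.span {2 * v3} ∧
    Ideal.span {2 * v3} ≤ Ideal.span {(2 : R3)} ∧
    Ideal.span {(2 : R3)} ≤ Ideal.span {v3} ∧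
    Ideal.span {v3} ≤ (⊤ : Ideal R3) ∧
    (∀ I : Ideal R3,
      I = ⊤ ∨ I = Ideal.span {v3} ∨ I = Ideal.span {(2 : R3)} ∨
      I = Ideal.span {2 * v3} ∨ I = ⊥) := by
  refine ⟨bot_le, ?_, ?_, le_top, ?_⟩
  · rw [Ideal.span_singleton_le_span_singleton]
    exact ⟨v3, rfl⟩
  · rw [Ideal.span_singleton_le_span_singleton]
    exact ⟨v3, by rw [two_eq, ← v3_sq]⟩
  intro I
  by_cases htop : I = ⊤
  · exact Or.inl htop
  refine Or.inr ?_
  have hIv : I ≤ Ideal.span {v3} := by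
    intro x hx
    obtain ⟨a, b, rfl⟩ := repr3 x
    by_cases ha : IsUnit a
    · exact absurd (I.eq_top_of_isUnit_mem hx (unit3 b ha)) htop
    · obtain ⟨c, rfl⟩ := nonunit_eq ha
      rw [Ideal.mem_span_singleton]
      refine ⟨phi3 b + phi3 c * v3, ?_⟩
      simp only [map_mul]
      linear_combination (-(phi3 c)) * v3_sq
  by_cases hv : v3 ∈ I
  · exact Or.inl (le_antisymm hIv ((Ideal.span_singleton_le_iff_mem I).2 hv))
  refine Or.inr ?_
  have hI2 : I ≤ Ideal.span {(2 : R3)} := by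
    intro x hx
    have hxv := hIv hx
    rw [Ideal.mem_span_singleton] at hxv
    obtain ⟨y, rfl⟩ := hxv
    obtain ⟨c, d, rfl⟩ := repr3 y
    by_cases hc : IsUnit c
    · exfalso
      obtain ⟨u, hu⟩ := unit3 d hc
      apply hv
      have : v3 = v3 * (phi3 c + phi3 d * v3) * ↑u⁻¹ := by
        rw [← hu, Units.mul_inv_cancel_right]
      rw [this]
      exact Ideal.mul_mem_right _ _ hx
    · obtain ⟨c', rfl⟩ := nonunit_eq hc
      rw [Ideal.mem_span_singleton]
      refine ⟨phi3 d + phi3 c' * v3, ?_⟩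
      simp only [map_mul, two_eq]
      linear_combination phi3 d * v3_sq
  by_cases h2 : (2 : R3) ∈ I
  · exact Or.inl (le_antisymm hI2 ((Ideal.span_singleton_le_iff_mem I).2 h2))
  refine Or.inr ?_
  have hI2v : I ≤ Ideal.span {2 * v3} := by
    intro x hx
    have hx2 := hI2 hx
    rw [Ideal.mem_span_singleton] at hx2
    obtain ⟨y, rfl⟩ := hx2
    obtain ⟨c, d, rfl⟩ := repr3 y
    by_cases hc : IsUnit c
    · exfalso
      obtain ⟨u, hu⟩ := unit3 d hc
      apply h2
      have : (2 : R3) = 2 * (phi3 c + phi3 d * v3) * ↑u⁻¹ := by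
        rw [← hu, Units.mul_inv_cancel_right]
      rw [this]
      exact Ideal.mul_mem_right _ _ hx
    · obtain ⟨c', rfl⟩ := nonunit_eq hc
      rw [Ideal.mem_span_singleton]
      refine ⟨phi3 d, ?_⟩
      have h4 : phi3 2 * phi3 2 * phi3 c' = 0 := by
        rw [← map_mul, ← map_mul, show (2 : ZMod 4) * 2 = 0 from by decide, zero_mul, map_zero]
      simp only [map_mul, two_eq]
      linear_combination h4
  by_cases h2v : 2 * v3 ∈ I
  · exact Or.inl (le_antisymm hI2v ((Ideal.span_singleton_le_iff_mem I).2 h2v))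
  refine Or.inr ?_
  rw [eq_bot_iff]
  intro x hx
  have hx2v := hI2v hx
  rw [Ideal.mem_span_singleton] at hx2v
  obtain ⟨y, rfl⟩ := hx2v
  obtain ⟨c, d, rfl⟩ := repr3 y
  by_cases hc : IsUnit c
  · exfalso
    obtain ⟨u, hu⟩ := unit3 d hc
    apply h2v
    have : 2 * v3 = 2 * v3 * (phi3 c + phi3 d * v3) * ↑u⁻¹ := by
      rw [← hu, Units.mul_inv_cancel_right]
    rw [this]
    exact Ideal.mul_mem_right _ _ hx
  · obtain ⟨c', rfl⟩ := nonunit_eq hc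
    have h4 : phi3 2 * phi3 2 = 0 := by
      rw [← map_mul, show (2 : ZMod 4) * 2 = 0 from by decide, map_zero]
    have hz : 2 * v3 * (phi3 (2 * c') + phi3 d * v3) = 0 := by
      simp only [map_mul, two_eq]
      linear_combination (phi3 2 * phi3 d) * v3_sq + (phi3 c' * v3 + phi3 d) * h4
    rw [hz]
    exact Ideal.zero_mem ⊥
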